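/- Let g be a Lie algebra over a field k and suppose there exists a wide homomorphism r : g → n_n(k) with n ≥ 2. Then g^{(n−1)} strictly contains g^{(n)}; in particular g^{(n−1)} ≠ 0. (This expresses the paper's inequality w ≤ d between the width and the nilpotent depth of g.) -/

import Mathlib

attribute [local instance 100] LieRing.ofAssociativeRing

/-- If a Lie algebra `g` over a field `k` admits a wide homomorphism
`r : g → n_n(k)` with `n ≥ 2`, then `g^{(n-1)}` strictly contains `g^{(n)}`; in particular
`g^{(n-1)} ≠ 0`.  (Note Mathlib's `lowerCentralSeries ⋯ 0 = g = g^{(1)}`, so `g^{(s)}` is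
`lowerCentralSeries ⋯ (s-1)`; the conclusion reads
`lowerCentralSeries (n-1) < lowerCentralSeries (n-2)` and `lowerCentralSeries (n-2) ≠ ⊥`.) -/
theorem stmt_9 {k : Type*} [Field k] {g : Type*} [LieRing g] [LieAlgebra k g] {n : ℕ}
    (hn : 2 ≤ n)
    (r : g →ₗ⁅k⁆ Matrix (Fin n) (Fin n) k)
    (hr : ∀ (v : g) (i j : Fin n), j ≤ i → r v i j = 0)
    (hflag : ∀ (i : ℕ) (hi : i + 1 < n), ∃ v : g, r v ⟨i, by omega⟩ ⟨i + 1, hi⟩ ≠ 0)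
    (hwide : ∀ (i j : ℕ) (hi : i + 1 < n) (hj : j + 1 < n), i ≠ j →
      ∀ a b : k,
        (∀ v : g,
          a * r v ⟨i, by omega⟩ ⟨i + 1, hi⟩ + b * r v ⟨j, by omega⟩ ⟨j + 1, hj⟩ = 0) →
        a = 0 ∧ b = 0) :
    LieModule.lowerCentralSeries k g g (n - 1) < LieModule.lowerCentralSeries k g g (n - 2) ∧
      LieModule.lowerCentralSeries k g g (n - 2) ≠ ⊥ := by
  -- Lemma A: vanishing of entries at distance ≤ s on the s-th term of the series
  have hvan : ∀ s : ℕ, ∀ z ∈ LieModule.lowerCentralSeries k g g s,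
      ∀ i j : Fin n, (j : ℕ) ≤ (i : ℕ) + s → r z i j = 0 := by
    intro s
    induction s with
    | zero =>
      intro z _ i j hij
      exact hr z i j ((by simp only [Fin.le_def, Fin.val_mk]; omega))
    | succ s ih =>
      intro z hz
      rw [LieModule.lowerCentralSeries_succ, ← LieSubmodule.mem_toSubmodule,
        LieSubmodule.lieIdeal_oper_eq_linear_span'] at hz
      induction hz using Submodule.span_induction with
      | mem m hm =>
        obtain ⟨x, -, w, hw, rfl⟩ := hm
        intro i j hij
        rw [LieHom.map_lie, Ring.lie_def]
        have h1 : (r x * r w) i j = 0 := by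
          rw [Matrix.mul_apply]
          apply Finset.sum_eq_zero
          intro l _
          rcases le_or_gt (l : ℕ) (i : ℕ) with hl | hl
          · rw [hr x i l ((by simp only [Fin.le_def, Fin.val_mk]; omega)), zero_mul]
          · rw [ih w hw l j (by omega), mul_zero]
        have h2 : (r w * r x) i j = 0 := by
          rw [Matrix.mul_apply]
          apply Finset.sum_eq_zero
          intro l _
          rcases le_or_gt (j : ℕ) (l : ℕ) with hl | hl
          · rw [hr x l j ((by simp only [Fin.le_def, Fin.val_mk]; omega)), mul_zero]
          · rw [ih w hw i l (by omega), zero_mul]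
        simp [Matrix.sub_apply, h1, h2]
      | zero => simp
      | add y w _ _ hy hw =>
        intro i j hij
        simp [map_add, hy i j hij, hw i j hij]
      | smul a y _ hy =>
        intro i j hij
        simp [map_smul, hy i j hij]
  -- Main induction
  have hmain : ∀ s : ℕ, ∀ i : ℕ, ∀ _hsi : i + s + 1 < n,
      ∃ z ∈ LieModule.lowerCentralSeries k g g s,
        r z ⟨i, by omega⟩ ⟨i + s + 1, by omega⟩ ≠ 0 := by
    intro s
    induction s with
    | zero =>
      intro i hi
      obtain ⟨v, hv⟩ := hflag i (by omega)
      exact ⟨v, LieSubmodule.mem_top v, hv⟩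
    | succ s ih =>
      intro i hi
      obtain ⟨z1, hz1mem, hz1⟩ := ih (i + 1) (by omega)
      -- bracket entry formula
      have hbr : ∀ (x : g), ∀ z ∈ LieModule.lowerCentralSeries k g g s,
          r ⁅x, z⁆ ⟨i, by omega⟩ ⟨i + s + 2, by omega⟩ =
            r x ⟨i, by omega⟩ ⟨i + 1, by omega⟩ * r z ⟨i + 1, by omega⟩ ⟨i + s + 2, by omega⟩ -
            r z ⟨i, by omega⟩ ⟨i + s + 1, by omega⟩ *
              r x ⟨i + s + 1, by omega⟩ ⟨i + s + 2, by omega⟩ := by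
        intro x z hz
        rw [LieHom.map_lie, Ring.lie_def, Matrix.sub_apply, Matrix.mul_apply, Matrix.mul_apply]
        have e1 : ∑ l : Fin n, r x ⟨i, by omega⟩ l * r z l ⟨i + s + 2, by omega⟩ =
            r x ⟨i, by omega⟩ ⟨i + 1, by omega⟩ * r z ⟨i + 1, by omega⟩ ⟨i + s + 2, by omega⟩ := by
          apply Finset.sum_eq_single
          · intro l _ hl
            rcases le_or_gt (l : ℕ) i with h | h
            · rw [hr x _ l ((by simp only [Fin.le_def, Fin.val_mk]; omega)), zero_mul]
            · have : i + 2 ≤ (l : ℕ) := by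
                rcases Nat.lt_or_ge (l : ℕ) (i + 2) with h2 | h2
                · exact absurd (Fin.ext (by omega : (l : ℕ) = i + 1)) hl
                · exact h2
              rw [hvan s z hz l ⟨i + s + 2, by omega⟩ (by simp; omega), mul_zero]
          · intro h; exact absurd (Finset.mem_univ _) h
        have e2 : ∑ l : Fin n, r z ⟨i, by omega⟩ l * r x l ⟨i + s + 2, by omega⟩ =
            r z ⟨i, by omega⟩ ⟨i + s + 1, by omega⟩ *
              r x ⟨i + s + 1, by omega⟩ ⟨i + s + 2, by omega⟩ := by
          apply Finset.sum_eq_single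
          · intro l _ hl
            rcases le_or_gt (i + s + 2) (l : ℕ) with h | h
            · rw [hr x l _ ((by simp only [Fin.le_def, Fin.val_mk]; omega)), mul_zero]
            · have : (l : ℕ) ≤ i + s := by
                rcases Nat.lt_or_ge (i + s) (l : ℕ) with h2 | h2
                · exact absurd (Fin.ext (by omega : (l : ℕ) = i + s + 1)) hl
                · exact h2
              rw [hvan s z hz ⟨i, by omega⟩ l (by simp; omega), zero_mul]
          · intro h; exact absurd (Finset.mem_univ _) h
        rw [e1, e2]
      by_contra hcon
      push_neg at hcon
      have hzero : ∀ (x : g), ∀ z ∈ LieModule.lowerCentralSeries k g g s,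
          r ⁅x, z⁆ ⟨i, by omega⟩ ⟨i + s + 2, by omega⟩ = 0 := by
        intro x z hz
        have hmem : ⁅x, z⁆ ∈ LieModule.lowerCentralSeries k g g (s + 1) := by
          rw [LieModule.lowerCentralSeries_succ]
          exact LieSubmodule.lie_mem_lie (LieSubmodule.mem_top x) hz
        exact hcon ⁅x, z⁆ hmem
      have key : ∀ x : g,
          r z1 ⟨i + 1, by omega⟩ ⟨i + s + 2, by omega⟩ * r x ⟨i, by omega⟩ ⟨i + 1, by omega⟩ +
          (- r z1 ⟨i, by omega⟩ ⟨i + s + 1, by omega⟩) *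
            r x ⟨i + s + 1, by omega⟩ ⟨i + s + 2, by omega⟩ = 0 := by
        intro x
        have h := hbr x z1 hz1mem
        rw [hzero x z1 hz1mem] at h
        linear_combination -h
      have hw := hwide i (i + s + 1) (by omega) (by omega) (by omega)
        (r z1 ⟨i + 1, by omega⟩ ⟨i + s + 2, by omega⟩)
        (- r z1 ⟨i, by omega⟩ ⟨i + s + 1, by omega⟩)
        (fun v => key v)
      have hval : r z1 ⟨i + 1, by omega⟩ ⟨i + 1 + s + 1, by omega⟩ ≠ 0 := hz1
      apply hval
      have : (⟨i + 1 + s + 1, by omega⟩ : Fin n) = ⟨i + s + 2, by omega⟩ := Fin.mk_eq_mk.mpr (by omega)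
      rw [this]
      exact hw.1
  obtain ⟨z, hzmem, hz⟩ := hmain (n - 2) 0 (by omega)
  have hvanfull : ∀ w ∈ LieModule.lowerCentralSeries k g g (n - 1), r w = 0 := by
    intro w hw
    ext i j
    rw [hvan (n - 1) w hw i j (by omega)]
    simp
  have hznotin : z ∉ LieModule.lowerCentralSeries k g g (n - 1) := by
    intro hmem
    apply hz
    rw [hvanfull z hmem]
    simp
  constructor
  · refine lt_of_le_of_ne (LieModule.antitone_lowerCentralSeries k g g (by omega)) ?_
    intro heq
    exact hznotin (heq ▸ hzmem)
  · intro hbot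
    rw [hbot] at hzmem
    apply hz
    rw [(LieSubmodule.mem_bot z).mp hzmem]
    simp
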